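/- arXiv:2307.13935 — 2 statements merged into one kernel-verified Lean document; each statement's English description precedes it below -/
import Mathlib

section
/- Discrete Noether identity (one dimension, first order): if Q : ℤ → ℝ satisfies the infinitesimal invariance condition Q(n)·∂L/∂u₀(n, u(n), u(n+1)) + Q(n+1)·∂L/∂u₁(n, u(n), u(n+1)) = F(n+1) - F(n) for all n (for some F : ℤ → ℝ), then Q(n)·E(L)(n) = D(F(n) - Q(n)·∂L/∂u₁(n-1, u(n-1), u(n)))(n), where D is the forward difference. In particular, on solutions of the Euler–Lagrange equation E(L) = 0, the quantity F(n) - Q(n)·∂L/∂u₁(n-1, u(n-1), u(n)) is a conserved (first-integral) quantity. -/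
theorem discrete_noether_identity (L : ℤ → ℝ → ℝ → ℝ) (u Q F : ℤ → ℝ)
    (hinv : ∀ n : ℤ, Q n * deriv (fun a => L n a (u (n + 1))) (u n)
        + Q (n + 1) * deriv (fun b => L n (u n) b) (u (n + 1)) = F (n + 1) - F n) :
    let E : ℤ → ℝ := fun n => deriv (fun a => L n a (u (n + 1))) (u n)
        + deriv (fun b => L (n - 1) (u (n - 1)) b) (u n)
    let G : ℤ → ℝ := fun n => F n - Q n * deriv (fun b => L (n - 1) (u (n - 1)) b) (u n)
    (∀ n : ℤ, Q n * E n = G (n + 1) - G n)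
      ∧ ((∀ n : ℤ, E n = 0) → ∀ n : ℤ, G (n + 1) = G n) := by
  intro E G
  have key : ∀ n : ℤ, Q n * E n = G (n + 1) - G n := by
    intro n
    have h := hinv n
    simp only [E, G, add_sub_cancel_right]
    linarith
  exact ⟨key, fun hE n => by have := key n; rw [hE n] at this; linarith⟩
end

section
/- The Euler-B discrete Hamiltonian map preserves the symplectic form: if (q₀, p₀) ↦ (q₁, p₁) is defined implicitly by q₁ - q₀ = ∂H/∂p (q₀, p₁) and p₁ - p₀ = -∂H/∂q (q₀, p₁) for a smooth H : ℝ² → ℝ, and this relation defines a smooth map near a point, then its Jacobian matrix M satisfies Mᵀ J M = J, where J = [[0,1],[-1,0]]; equivalently, dp₁ ∧ dq₁ = dp₀ ∧ dq₀. -/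
theorem euler_B_map_is_symplectic (H q1 p1 : ℝ × ℝ → ℝ)
    (hH : ContDiff ℝ 2 H)
    (hq1 : Differentiable ℝ q1) (hp1 : Differentiable ℝ p1)
    (hrel1 : ∀ z : ℝ × ℝ, q1 z - z.1 = fderiv ℝ H (z.1, p1 z) (0, 1))
    (hrel2 : ∀ z : ℝ × ℝ, p1 z - z.2 = - fderiv ℝ H (z.1, p1 z) (1, 0))
    (z₀ : ℝ × ℝ) :
    let M : Matrix (Fin 2) (Fin 2) ℝ :=
      !![fderiv ℝ q1 z₀ (1, 0), fderiv ℝ q1 z₀ (0, 1);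
         fderiv ℝ p1 z₀ (1, 0), fderiv ℝ p1 z₀ (0, 1)]
    let J : Matrix (Fin 2) (Fin 2) ℝ := !![0, 1; -1, 0]
    Matrix.transpose M * J * M = J := by
  intro M J
  set w : ℝ × ℝ → ℝ × ℝ := fun z => (z.1, p1 z) with hw
  have hwdiff : Differentiable ℝ w := (differentiable_fst).prodMk hp1
  set w₀ : ℝ × ℝ := w z₀ with hw0
  set A : (ℝ × ℝ) →L[ℝ] (ℝ × ℝ) →L[ℝ] ℝ := fderiv ℝ (fderiv ℝ H) w₀ with hA
  have hF : ContDiff ℝ 1 (fderiv ℝ H) := hH.fderiv_right (le_refl _)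
  have hAsymm : ∀ u v : ℝ × ℝ, A u v = A v u := hH.contDiffAt.isSymmSndFDerivAt (by simp)
  have hWat : HasFDerivAt w ((ContinuousLinearMap.fst ℝ ℝ ℝ).prod (fderiv ℝ p1 z₀)) z₀ :=
    (hasFDerivAt_fst.prodMk (hp1 z₀).hasFDerivAt)
  set W : (ℝ × ℝ) →L[ℝ] (ℝ × ℝ) := (ContinuousLinearMap.fst ℝ ℝ ℝ).prod (fderiv ℝ p1 z₀) with hWdef
  have key : ∀ v : ℝ × ℝ, HasFDerivAt (fun z => fderiv ℝ H (w z) v)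
      ((ContinuousLinearMap.apply ℝ ℝ v).comp (A.comp W)) z₀ := by
    intro v
    have h2 : HasFDerivAt (fderiv ℝ H) A w₀ := (hF.differentiable one_ne_zero w₀).hasFDerivAt
    exact ((ContinuousLinearMap.apply ℝ ℝ v).hasFDerivAt.comp z₀ (h2.comp z₀ hWat))
  -- q1 and p1 derivatives
  have hq1eq : q1 = fun z => z.1 + fderiv ℝ H (w z) (0, 1) := by
    funext z; have := hrel1 z; simp only [hw]; linarith
  have hp1eq : p1 = fun z => z.2 - fderiv ℝ H (w z) (1, 0) := by
    funext z; have := hrel2 z; simp only [hw]; linarith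
  have hq1' : HasFDerivAt q1 ((ContinuousLinearMap.fst ℝ ℝ ℝ) +
      (ContinuousLinearMap.apply ℝ ℝ ((0 : ℝ), (1 : ℝ))).comp (A.comp W)) z₀ := by
    rw [hq1eq]; exact (hasFDerivAt_fst).add (key (0, 1))
  have hp1' : HasFDerivAt p1 ((ContinuousLinearMap.snd ℝ ℝ ℝ) -
      (ContinuousLinearMap.apply ℝ ℝ ((1 : ℝ), (0 : ℝ))).comp (A.comp W)) z₀ := by
    rw [hp1eq]; exact (hasFDerivAt_snd).sub (key (1, 0))
  have hq : ∀ u : ℝ × ℝ, fderiv ℝ q1 z₀ u = u.1 + A (W u) (0, 1) := by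
    intro u; rw [hq1'.fderiv]; simp
  have hp : ∀ u : ℝ × ℝ, fderiv ℝ p1 z₀ u = u.2 - A (W u) (1, 0) := by
    intro u; rw [hp1'.fderiv]; simp
  set a : ℝ := fderiv ℝ p1 z₀ (1, 0) with ha
  set b : ℝ := fderiv ℝ p1 z₀ (0, 1) with hb
  set c : ℝ := fderiv ℝ q1 z₀ (1, 0) with hc
  set d : ℝ := fderiv ℝ q1 z₀ (0, 1) with hd
  have hW10 : W ((1 : ℝ), (0 : ℝ)) = (1, a) := by simp [hWdef, ha]
  have hW01 : W ((0 : ℝ), (1 : ℝ)) = (0, b) := by simp [hWdef, hb]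
  have hsplit1 : ((1 : ℝ), a) = ((1 : ℝ), (0 : ℝ)) + a • ((0 : ℝ), (1 : ℝ)) := by
    simp [Prod.ext_iff]
  have hsplit2 : ((0 : ℝ), b) = b • ((0 : ℝ), (1 : ℝ)) := by simp [Prod.ext_iff]
  set P : ℝ := A (0, 1) (1, 0) with hP
  set Q : ℝ := A (1, 0) (0, 1) with hQ
  set C : ℝ := A (0, 1) (0, 1) with hC
  have hPQ : Q = P := hAsymm _ _
  have hbeq : b = 1 - b * P := by
    have h := hp (0, 1)
    rw [hW01, hsplit2, map_smul, ContinuousLinearMap.smul_apply, smul_eq_mul,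
      ← hP, ← hb] at h
    simpa using h
  have hceq : c = 1 + (Q + a * C) := by
    have h := hq (1, 0)
    rw [hW10, hsplit1, map_add, map_smul, ContinuousLinearMap.add_apply,
      ContinuousLinearMap.smul_apply, smul_eq_mul, ← hQ, ← hC, ← hc] at h
    simpa [add_assoc] using h
  have hdeq : d = b * C := by
    have h := hq (0, 1)
    rw [hW01, hsplit2, map_smul, ContinuousLinearMap.smul_apply, smul_eq_mul,
      ← hC, ← hd] at h
    simpa using h
  clear_value a b c d P Q C
  have hdet : c * b - a * d = 1 := by
    rw [hceq, hdeq, hPQ]; linear_combination hbeq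
  unfold M J
  rw [← hc, ← hd, ← ha, ← hb]
  ext i j
  fin_cases i <;> fin_cases j <;>
    simp [Matrix.mul_apply, Fin.sum_univ_two, Matrix.transpose_apply, Matrix.vecHead, Matrix.vecTail] <;> linarith [hdet]
end
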